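/- Let m > 1 be an integer and let μ(m) denote the smallest positive integer k such that m divides k!. Then both the falling factorial polynomial (x)_{2μ(m)} = ∏_{j=0}^{2μ(m)−1}(x − j) and the square ((x)_{μ(m)})² = (∏_{j=0}^{μ(m)−1}(x − j))² are null polynomials on the ring of dual numbers ℤ_m[α]. -/
import Mathlib


open Polynomial

private lemma descPoch_prod (k : ℕ) :
    descPochhammer ℤ k = ∏ j ∈ Finset.range k, ((X : ℤ[X]) - C (j : ℤ)) := by
  induction k with
  | zero => simp
  | succ n ih =>
      rw [descPochhammer_succ_right, ih, Finset.prod_range_succ]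
      simp

private lemma key_prod_zero {m : ℕ} (hm : 0 < m) {μ : ℕ} (hdvd : m ∣ Nat.factorial μ)
    (a : ZMod m) : ∏ j ∈ Finset.range μ, (a - (j : ZMod m)) = 0 := by
  haveI : NeZero m := ⟨hm.ne'⟩
  have ha : a = ((a.val : ℤ) : ZMod m) := by push_cast; rw [ZMod.natCast_val, ZMod.cast_id]
  have h1 : (∏ j ∈ Finset.range μ, (((a.val : ℤ) - (j : ℤ)) : ℤ) : ℤ)
      = (a.val.descFactorial μ : ℤ) := by
    have := descPochhammer_eval_eq_descFactorial ℤ a.val μ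
    rw [descPoch_prod] at this
    simpa [eval_prod] using this
  have h2 : ((a.val.descFactorial μ : ℤ) : ZMod m) = 0 := by
    have : (m : ℤ) ∣ (a.val.descFactorial μ : ℤ) := by
      exact_mod_cast dvd_trans hdvd (Nat.factorial_dvd_descFactorial _ _)
    exact (ZMod.intCast_zmod_eq_zero_iff_dvd _ _).mpr this
  calc ∏ j ∈ Finset.range μ, (a - (j : ZMod m))
      = ((∏ j ∈ Finset.range μ, (((a.val : ℤ) - (j : ℤ)) : ℤ) : ℤ) : ZMod m) := by
        push_cast [← ha]
        rfl
    _ = 0 := by rw [h1, h2]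

private lemma mul_eq_zero_of_fst_eq_zero {R : Type*} [CommRing R]
    {x y : DualNumber R} (hx : x.fst = 0) (hy : y.fst = 0) : x * y = 0 := by
  ext
  · simp [hx, hy]
  · simp [TrivSqZeroExt.snd_mul, hx, hy]

/-- **Theorem (falling factorial null polynomials on ℤ_m[α]).**
Let `m > 1` and let `μ(m)` be the smallest positive integer `k` with
`m ∣ k!`.  Then both `(x)_{2μ(m)} = ∏_{j=0}^{2μ(m)-1} (x - j)` and
`((x)_{μ(m)})²` are null polynomials on the dual numbers `ℤ_m[α]`. -/
theorem fallingFactorial_null_on_dualNumber (m : ℕ) (hm : 1 < m) (μ : ℕ)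
    (hμ : IsLeast {k : ℕ | 0 < k ∧ m ∣ Nat.factorial k} μ) :
    (∀ z : DualNumber (ZMod m),
        aeval z (∏ j ∈ Finset.range (2 * μ), ((X : ℤ[X]) - C (j : ℤ))) = 0) ∧
      (∀ z : DualNumber (ZMod m),
        aeval z ((∏ j ∈ Finset.range μ, ((X : ℤ[X]) - C (j : ℤ))) ^ 2) = 0) := by
  have hm0 : 0 < m := Nat.zero_lt_one.trans hm
  have hdvd : m ∣ Nat.factorial μ := hμ.1.2
  -- fst of the evaluation of the product polynomial, shifted by `c`
  have hfst : ∀ (z : DualNumber (ZMod m)) (c : ℕ),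
      (aeval z (∏ j ∈ Finset.range μ, ((X : ℤ[X]) - C ((c + j : ℕ) : ℤ)))).fst = 0 := by
    intro z c
    have : (TrivSqZeroExt.fstHom ℤ (ZMod m) (ZMod m))
        (aeval z (∏ j ∈ Finset.range μ, ((X : ℤ[X]) - C ((c + j : ℕ) : ℤ))))
        = aeval z.fst (∏ j ∈ Finset.range μ, ((X : ℤ[X]) - C ((c + j : ℕ) : ℤ))) := by
      rw [← Polynomial.aeval_algHom_apply]
      rfl
    have h2 : aeval z.fst (∏ j ∈ Finset.range μ, ((X : ℤ[X]) - C ((c + j : ℕ) : ℤ)))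
        = ∏ j ∈ Finset.range μ, ((z.fst - c) - (j : ZMod m)) := by
      rw [map_prod]
      refine Finset.prod_congr rfl fun j _ => ?_
      simp only [map_sub, map_add, aeval_X, aeval_C, map_natCast, algebraMap_int_eq, eq_intCast]
      push_cast
      ring
    have h3 := key_prod_zero hm0 hdvd (z.fst - c)
    calc (aeval z (∏ j ∈ Finset.range μ, ((X : ℤ[X]) - C ((c + j : ℕ) : ℤ)))).fst
        = aeval z.fst (∏ j ∈ Finset.range μ, ((X : ℤ[X]) - C ((c + j : ℕ) : ℤ))) := this
      _ = 0 := by rw [h2, h3]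
  constructor
  · intro z
    have hsplit : (∏ j ∈ Finset.range (2 * μ), ((X : ℤ[X]) - C (j : ℤ)))
        = (∏ j ∈ Finset.range μ, ((X : ℤ[X]) - C ((0 + j : ℕ) : ℤ)))
          * (∏ j ∈ Finset.range μ, ((X : ℤ[X]) - C ((μ + j : ℕ) : ℤ))) := by
      rw [two_mul, Finset.prod_range_add]
      simp
    rw [hsplit, map_mul]
    exact mul_eq_zero_of_fst_eq_zero (hfst z 0) (hfst z μ)
  · intro z
    have h0 : (∏ j ∈ Finset.range μ, ((X : ℤ[X]) - C (j : ℤ)))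
        = ∏ j ∈ Finset.range μ, ((X : ℤ[X]) - C ((0 + j : ℕ) : ℤ)) := by simp
    rw [sq, map_mul, h0]
    exact mul_eq_zero_of_fst_eq_zero (hfst z 0) (hfst z 0)
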